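/- arXiv:1508.02170 — 6 statements merged into one kernel-verified Lean document; each statement's English description precedes it below -/
import Mathlib

section
/- Let n and k be natural numbers with 2 ≤ k ≤ n, and let α ∈ S_n be a permutation whose cycle type consists of exactly ⌊n/k⌋ cycles of length k (all remaining points fixed). Then 2·ind(α) ≥ n − 1, and equality 2·ind(α) = n − 1 holds if and only if n is odd and either k = 2 or 2k = n + 1. -/
/-- Lemma on the index of a permutation consisting of `⌊n/k⌋` disjoint
`k`-cycles: `2 · ind(α) ≥ n - 1`, with equality iff `n` is odd and `k = 2` or
`2k = n + 1`.  Here `ind(α)` is the sum of the cycle type of `α` minus the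
number of its entries. -/
theorem index_lower_bound (n k : ℕ) (hk : 2 ≤ k) (hkn : k ≤ n)
    (α : Equiv.Perm (Fin n))
    (hα : α.cycleType = Multiset.replicate (n / k) k) :
    n - 1 ≤ 2 * (α.cycleType.sum - α.cycleType.card) ∧
    (2 * (α.cycleType.sum - α.cycleType.card) = n - 1 ↔
      Odd n ∧ (k = 2 ∨ 2 * k = n + 1)) := by
  rw [hα, Multiset.sum_replicate, Multiset.card_replicate, smul_eq_mul, Nat.odd_iff]
  set q := n / k with hqdef
  set r := n % k with hrdef
  have hq : 1 ≤ q := (Nat.one_le_div_iff (by omega)).mpr hkn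
  have hr : r < k := Nat.mod_lt _ (by omega)
  have hqk : q * k = 2 * q + q * (k - 2) := by
    have h2 : 2 + (k - 2) = k := by omega
    calc q * k = q * (2 + (k - 2)) := by rw [h2]
      _ = 2 * q + q * (k - 2) := by ring
  set m := q * (k - 2) with hmdef
  have hn : 2 * q + m + r = n := by
    rw [← hqk, mul_comm]
    exact Nat.div_add_mod n k
  have hmk : k - 2 ≤ m := Nat.le_mul_of_pos_left (k - 2) hq
  have hq1 : q = 1 → m = k - 2 := by intro h; simp [hmdef, h]
  have hq2 : 2 ≤ q → 2 * (k - 2) ≤ m := fun h => Nat.mul_le_mul_right _ h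
  have hk2 : k = 2 → m = 0 := by intro h; simp [hmdef, h]
  rw [hqk]
  omega
end

section
/- Let n and k be natural numbers with n even and 2 ≤ k ≤ n, and let α ∈ S_n be a permutation whose cycle type consists of exactly ⌊n/k⌋ cycles of length k (all remaining points fixed). Then 2·ind(α) ≥ n, and equality 2·ind(α) = n holds if and only if k = 2, or 2k = n + 2, or (n, k) = (8, 3). -/
/-- Lemma on the index of a permutation consisting of `⌊n/k⌋` disjoint
`k`-cycles, for even `n`: `2 · ind(α) ≥ n`, with equality iff `k = 2`, or
`2k = n + 2`, or `(n, k) = (8, 3)`.  Here `ind(α)` is the sum of the cycle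
type of `α` minus the number of its entries. -/
theorem index_lower_bound_even (n k : ℕ) (hn : Even n) (hk : 2 ≤ k) (hkn : k ≤ n)
    (α : Equiv.Perm (Fin n))
    (hα : α.cycleType = Multiset.replicate (n / k) k) :
    n ≤ 2 * (α.cycleType.sum - α.cycleType.card) ∧
    (2 * (α.cycleType.sum - α.cycleType.card) = n ↔
      k = 2 ∨ 2 * k = n + 2 ∨ (n = 8 ∧ k = 3)) := by
  obtain ⟨m, hm⟩ := hn
  rw [hα, Multiset.sum_replicate, Multiset.card_replicate, smul_eq_mul]
  have e : n / k * k + n % k = n := Nat.div_add_mod' n k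
  have hr : n % k < k := Nat.mod_lt _ (by omega)
  have hq1 : 1 ≤ n / k := (Nat.one_le_div_iff (by omega)).mpr hkn
  generalize hq : n / k = q at e hq1 ⊢
  generalize hrr : n % k = r at e hr
  rcases Nat.lt_or_ge k 3 with h3 | h3
  · have hk2 : k = 2 := by omega
    subst hk2
    omega
  · rcases Nat.lt_or_ge q 2 with hq2 | hq2
    · have : q = 1 := by omega
      subst this
      omega
    · rcases Nat.lt_or_ge k 4 with h4 | h4
      · have hk3 : k = 3 := by omega
        subst hk3
        omega
      · have key : 2 * (k - 2) + 2 * q ≤ q * k := by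
          have h1 : 2 * (k - 2) ≤ q * (k - 2) := Nat.mul_le_mul_right _ hq2
          have h2 : q * (k - 2) + 2 * q = q * k := by
            have hk' : k - 2 + 2 = k := by omega
            calc q * (k - 2) + 2 * q = q * ((k - 2) + 2) := by ring
              _ = q * k := by rw [hk']
          linarith
        generalize hM : q * k = M at key e ⊢
        omega
end

section
/- For every even integer c ≥ 6 there exist permutations x, y in the symmetric group S_{c+2} such that both x and y are c-cycles (cycle type {c}) and the product x·y has cycle type {c, 2}. -/
set_option maxHeartbeats 1600000

private def iotaF (c k : ℕ) : Fin (c + 2) :=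
  if h : k < c + 2 then ⟨k, h⟩ else ⟨0, by omega⟩

private lemma iotaF_val {c k : ℕ} (h : k < c + 2) : (iotaF c k).val = k := by
  simp [iotaF, h]

private lemma iotaF_inj {c a b : ℕ} (ha : a < c + 2) (hb : b < c + 2)
    (h : iotaF c a = iotaF c b) : a = b := by
  have := congrArg Fin.val h
  rwa [iotaF_val ha, iotaF_val hb] at this

private lemma iotaF_ne {c a b : ℕ} (ha : a < c + 2) (hb : b < c + 2) (h : a ≠ b) :
    iotaF c a ≠ iotaF c b := fun hh => h (iotaF_inj ha hb hh)

private def pat2 (c k : ℕ) : ℕ :=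
  if k < c - 4 then k else if k = c - 4 then c - 2 else if k = c - 3 then c - 4
  else if k = c - 2 then c else c + 1

private def pat3 (c k : ℕ) : ℕ :=
  if k ≤ c / 2 - 2 then 2 * k else if k = c / 2 - 1 then c else if k = c / 2 then c + 1
  else if k ≤ c - 2 then 2 * k - (c + 1) else c - 1

private lemma pat2_lt {c : ℕ} (hc6 : 6 ≤ c) (k : ℕ) : pat2 c k < c + 2 := by
  simp only [pat2]; split_ifs <;> omega

private lemma pat3_lt {c : ℕ} (hc6 : 6 ≤ c) (k : ℕ) : pat3 c k < c + 2 := by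
  simp only [pat3]; split_ifs <;> omega

private def LA (c : ℕ) : List (Fin (c + 2)) := (List.range c).map (iotaF c)
private def LB (c : ℕ) : List (Fin (c + 2)) := (List.range c).map (fun k => iotaF c (pat2 c k))
private def LC (c : ℕ) : List (Fin (c + 2)) := (List.range c).map (fun k => iotaF c (pat3 c k))

private lemma formPerm_map_range {N n : ℕ} (f : ℕ → Fin N)
    (hnd : ((List.range n).map f).Nodup) {k : ℕ} (hk : k < n) :
    ((List.range n).map f).formPerm (f k) = f ((k + 1) % n) := by
  have h := List.formPerm_apply_getElem ((List.range n).map f) hnd k (by simpa using hk)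
  simpa using h

private lemma cycleType_formPerm {N : ℕ} (l : List (Fin N)) (hnd : l.Nodup) {n : ℕ}
    (hl : l.length = n) (hn : 2 ≤ n) : l.formPerm.cycleType = {n} := by
  have hne : ∀ x, l ≠ [x] := by
    intro x h
    apply_fun List.length at h
    simp only [List.length_singleton] at h
    omega
  have hcyc := List.isCycle_formPerm hnd (by omega)
  rw [hcyc.cycleType, List.support_formPerm_of_nodup l hnd hne,
    List.toFinset_card_of_nodup hnd, hl]

/-- For every even `c ≥ 6` there exist two `c`-cycles `x, y ∈ S_{c+2}` whose
product has cycle type `{c, 2}`. -/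
theorem two_c_cycles (c : ℕ) (hc : Even c) (hc6 : 6 ≤ c) :
    ∃ x y : Equiv.Perm (Fin (c + 2)),
      x.cycleType = ({c} : Multiset ℕ) ∧ y.cycleType = ({c} : Multiset ℕ) ∧
      (x * y).cycleType = ({c, 2} : Multiset ℕ) := by
  have hc2 : c % 2 = 0 := Nat.even_iff.mp hc
  have hndA : (LA c).Nodup :=
    List.Nodup.map_on
      (fun x hx y hy h =>
        iotaF_inj (by simp at hx; omega) (by simp at hy; omega) h)
      (List.nodup_range (n := c))
  have hndB : (LB c).Nodup :=
    List.Nodup.map_on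
      (fun x hx y hy h => by
        simp only [List.mem_range] at hx hy
        have h' := iotaF_inj (pat2_lt hc6 x) (pat2_lt hc6 y) h
        simp only [pat2] at h'
        split_ifs at h' <;> omega)
      (List.nodup_range (n := c))
  have hndC : (LC c).Nodup :=
    List.Nodup.map_on
      (fun x hx y hy h => by
        simp only [List.mem_range] at hx hy
        have h' := iotaF_inj (pat3_lt hc6 x) (pat3_lt hc6 y) h
        simp only [pat3] at h'
        split_ifs at h' <;> omega)
      (List.nodup_range (n := c))
  have hA : ∀ k, k < c → (LA c).formPerm (iotaF c k) = iotaF c ((k + 1) % c) := by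
    intro k hk
    have := formPerm_map_range (n := c) (iotaF c) (by simpa [LA] using hndA) hk
    simpa [LA] using this
  have hB : ∀ k, k < c →
      (LB c).formPerm (iotaF c (pat2 c k)) = iotaF c (pat2 c ((k + 1) % c)) := by
    intro k hk
    have := formPerm_map_range (n := c) (fun k => iotaF c (pat2 c k))
      (by simpa [LB] using hndB) hk
    simpa [LB] using this
  have hC : ∀ k, k < c →
      (LC c).formPerm (iotaF c (pat3 c k)) = iotaF c (pat3 c ((k + 1) % c)) := by
    intro k hk
    have := formPerm_map_range (n := c) (fun k => iotaF c (pat3 c k))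
      (by simpa [LC] using hndC) hk
    simpa [LC] using this
  -- evaluation helpers
  have evalA : ∀ {k w : ℕ}, k < c → (k + 1) % c = w →
      (LA c).formPerm (iotaF c k) = iotaF c w := by
    intro k w hk h2; rw [← h2]; exact hA k hk
  have evalB : ∀ {k v w : ℕ}, k < c → pat2 c k = v → pat2 c ((k + 1) % c) = w →
      (LB c).formPerm (iotaF c v) = iotaF c w := by
    intro k v w hk h1 h2; rw [← h1, ← h2]; exact hB k hk
  have evalC : ∀ {k v w : ℕ}, k < c → pat3 c k = v → pat3 c ((k + 1) % c) = w →
      (LC c).formPerm (iotaF c v) = iotaF c w := by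
    intro k v w hk h1 h2; rw [← h1, ← h2]; exact hC k hk
  -- fixed-point helpers
  have nmA : ∀ v, c ≤ v → v < c + 2 → (LA c).formPerm (iotaF c v) = iotaF c v := by
    intro v hv hv2
    apply List.formPerm_apply_of_notMem
    simp only [LA, List.mem_map, List.mem_range, not_exists]
    rintro k ⟨hk, he⟩
    have := iotaF_inj (by omega) hv2 he
    omega
  have nmB : ∀ v, v < c + 2 → (∀ k, k < c → pat2 c k ≠ v) →
      (LB c).formPerm (iotaF c v) = iotaF c v := by
    intro v hv hno
    apply List.formPerm_apply_of_notMem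
    simp only [LB, List.mem_map, List.mem_range, not_exists]
    rintro k ⟨hk, he⟩
    exact hno k hk (iotaF_inj (pat2_lt hc6 k) hv he)
  have nmC : ∀ v, v < c + 2 → (∀ k, k < c → pat3 c k ≠ v) →
      (LC c).formPerm (iotaF c v) = iotaF c v := by
    intro v hv hno
    apply List.formPerm_apply_of_notMem
    simp only [LC, List.mem_map, List.mem_range, not_exists]
    rintro k ⟨hk, he⟩
    exact hno k hk (iotaF_inj (pat3_lt hc6 k) hv he)
  have hab : iotaF c (c - 3) ≠ iotaF c (c - 2) := iotaF_ne (by omega) (by omega) (by omega)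
  -- the key identity
  have key : (LA c).formPerm * (LB c).formPerm =
      (LC c).formPerm * Equiv.swap (iotaF c (c - 3)) (iotaF c (c - 2)) := by
    apply Equiv.ext
    rintro ⟨v, hv⟩
    have hi : (⟨v, hv⟩ : Fin (c + 2)) = iotaF c v := by
      apply Fin.ext; rw [iotaF_val hv]
    rw [hi, Equiv.Perm.mul_apply, Equiv.Perm.mul_apply]
    have hcase : v ≤ c - 6 ∨ v = c - 5 ∨ v = c - 4 ∨ v = c - 3 ∨ v = c - 2 ∨ v = c - 1 ∨
        v = c ∨ v = c + 1 := by omega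
    rcases hcase with h | h | h | h | h | h | h | h
    · -- v ≤ c - 6
      rw [evalB (k := v) (v := v) (w := v + 1) (by omega)
          (by simp only [pat2]; split_ifs <;> omega)
          (by rw [Nat.mod_eq_of_lt (by omega)]; simp only [pat2]; split_ifs <;> omega),
        evalA (k := v + 1) (w := v + 2) (by omega) (Nat.mod_eq_of_lt (by omega)),
        Equiv.swap_apply_of_ne_of_ne
          (iotaF_ne (by omega) (by omega) (by omega))
          (iotaF_ne (by omega) (by omega) (by omega))]
      rcases Nat.even_or_odd v with hpar | hpar
      · rw [Nat.even_iff] at hpar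
        rw [evalC (k := v / 2) (v := v) (w := v + 2) (by omega)
          (by simp only [pat3]; split_ifs <;> omega)
          (by rw [Nat.mod_eq_of_lt (by omega)]; simp only [pat3]; split_ifs <;> omega)]
      · rw [Nat.odd_iff] at hpar
        rw [evalC (k := (v + c + 1) / 2) (v := v) (w := v + 2) (by omega)
          (by simp only [pat3]; split_ifs <;> omega)
          (by rw [Nat.mod_eq_of_lt (by omega)]; simp only [pat3]; split_ifs <;> omega)]
    · subst v
      rw [evalB (k := c - 5) (v := c - 5) (w := c - 2) (by omega)
          (by simp only [pat2]; split_ifs <;> omega)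
          (by rw [Nat.mod_eq_of_lt (by omega)]; simp only [pat2]; split_ifs <;> omega),
        evalA (k := c - 2) (w := c - 1) (by omega) (by rw [Nat.mod_eq_of_lt (by omega)]; omega),
        Equiv.swap_apply_of_ne_of_ne
          (iotaF_ne (by omega) (by omega) (by omega))
          (iotaF_ne (by omega) (by omega) (by omega)),
        evalC (k := c - 2) (v := c - 5) (w := c - 1) (by omega)
          (by simp only [pat3]; split_ifs <;> omega)
          (by rw [Nat.mod_eq_of_lt (by omega)]; simp only [pat3]; split_ifs <;> omega)]
    · subst v
      rw [evalB (k := c - 3) (v := c - 4) (w := c) (by omega)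
          (by simp only [pat2]; split_ifs <;> omega)
          (by rw [Nat.mod_eq_of_lt (by omega)]; simp only [pat2]; split_ifs <;> omega),
        nmA c (by omega) (by omega),
        Equiv.swap_apply_of_ne_of_ne
          (iotaF_ne (by omega) (by omega) (by omega))
          (iotaF_ne (by omega) (by omega) (by omega)),
        evalC (k := c / 2 - 2) (v := c - 4) (w := c) (by omega)
          (by simp only [pat3]; split_ifs <;> omega)
          (by rw [Nat.mod_eq_of_lt (by omega)]; simp only [pat3]; split_ifs <;> omega)]
    · subst v
      rw [nmB (c - 3) (by omega) (by intro k hk; simp only [pat2]; split_ifs <;> omega),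
        evalA (k := c - 3) (w := c - 2) (by omega) (by rw [Nat.mod_eq_of_lt (by omega)]; omega),
        Equiv.swap_apply_left,
        nmC (c - 2) (by omega) (by intro k hk; simp only [pat3]; split_ifs <;> omega)]
    · subst v
      rw [evalB (k := c - 4) (v := c - 2) (w := c - 4) (by omega)
          (by simp only [pat2]; split_ifs <;> omega)
          (by rw [Nat.mod_eq_of_lt (by omega)]; simp only [pat2]; split_ifs <;> omega),
        evalA (k := c - 4) (w := c - 3) (by omega) (by rw [Nat.mod_eq_of_lt (by omega)]; omega),
        Equiv.swap_apply_right,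
        nmC (c - 3) (by omega) (by intro k hk; simp only [pat3]; split_ifs <;> omega)]
    · subst v
      rw [nmB (c - 1) (by omega) (by intro k hk; simp only [pat2]; split_ifs <;> omega),
        evalA (k := c - 1) (w := 0) (by omega)
          (by rw [show c - 1 + 1 = c from by omega, Nat.mod_self]),
        Equiv.swap_apply_of_ne_of_ne
          (iotaF_ne (by omega) (by omega) (by omega))
          (iotaF_ne (by omega) (by omega) (by omega)),
        evalC (k := c - 1) (v := c - 1) (w := 0) (by omega)
          (by simp only [pat3]; split_ifs <;> omega)
          (by rw [show c - 1 + 1 = c from by omega, Nat.mod_self]; simp only [pat3]; split_ifs <;> omega)]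
    · subst v
      rw [evalB (k := c - 2) (v := c) (w := c + 1) (by omega)
          (by simp only [pat2]; split_ifs <;> omega)
          (by rw [Nat.mod_eq_of_lt (by omega)]; simp only [pat2]; split_ifs <;> omega),
        nmA (c + 1) (by omega) (by omega),
        Equiv.swap_apply_of_ne_of_ne
          (iotaF_ne (by omega) (by omega) (by omega))
          (iotaF_ne (by omega) (by omega) (by omega)),
        evalC (k := c / 2 - 1) (v := c) (w := c + 1) (by omega)
          (by simp only [pat3]; split_ifs <;> omega)
          (by rw [Nat.mod_eq_of_lt (by omega)]; simp only [pat3]; split_ifs <;> omega)]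
    · subst v
      rw [evalB (k := c - 1) (v := c + 1) (w := 0) (by omega)
          (by simp only [pat2]; split_ifs <;> omega)
          (by rw [show c - 1 + 1 = c from by omega, Nat.mod_self]; simp only [pat2]; split_ifs <;> omega),
        evalA (k := 0) (w := 1) (by omega) (Nat.mod_eq_of_lt (by omega)),
        Equiv.swap_apply_of_ne_of_ne
          (iotaF_ne (by omega) (by omega) (by omega))
          (iotaF_ne (by omega) (by omega) (by omega)),
        evalC (k := c / 2) (v := c + 1) (w := 1) (by omega)
          (by simp only [pat3]; split_ifs <;> omega)
          (by rw [Nat.mod_eq_of_lt (by omega)]; simp only [pat3]; split_ifs <;> omega)]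
  refine ⟨(LA c).formPerm, (LB c).formPerm,
    cycleType_formPerm _ hndA (by simp [LA]) (by omega),
    cycleType_formPerm _ hndB (by simp [LB]) (by omega), ?_⟩
  rw [key]
  have hdisj : Equiv.Perm.Disjoint (LC c).formPerm
      (Equiv.swap (iotaF c (c - 3)) (iotaF c (c - 2))) := by
    rw [Equiv.Perm.disjoint_iff_disjoint_support,
      List.support_formPerm_of_nodup _ hndC
        (by intro x h; apply_fun List.length at h; simp [LC] at h; omega),
      Equiv.Perm.support_swap hab]
    rw [Finset.disjoint_right]
    intro a ha
    simp only [Finset.mem_insert, Finset.mem_singleton] at ha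
    simp only [List.mem_toFinset, LC, List.mem_map, List.mem_range]
    rintro ⟨k, hk, he⟩
    rcases ha with rfl | rfl
    · have := iotaF_inj (pat3_lt hc6 k) (by omega) he
      simp only [pat3] at this; split_ifs at this <;> omega
    · have := iotaF_inj (pat3_lt hc6 k) (by omega) he
      simp only [pat3] at this; split_ifs at this <;> omega
  rw [Equiv.Perm.Disjoint.cycleType_mul hdisj, cycleType_formPerm (n := c) _ hndC (by simp [LC]) (by omega),
    (Equiv.Perm.isCycle_swap hab).cycleType, Equiv.Perm.card_support_swap hab]
  rfl
end

section
/- For every odd integer a ≥ 3 there exist permutations x, y in the symmetric group S_{2a} such that x has cycle type {a, a} (the disjoint product of two a-cycles), y is an a-cycle (cycle type {a}), and the product x·y has cycle type {2a−2, 2}. -/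
open Equiv Equiv.Perm List

namespace ExceptionalAA

def E (h m : ℕ) : Fin (2 * (2 * h + 1)) := ⟨m % (2 * (2 * h + 1)), Nat.mod_lt _ (by omega)⟩

lemma E_inj {h m m' : ℕ} (hm : m < 4 * h + 2) (hm' : m' < 4 * h + 2)
    (he : E h m = E h m') : m = m' := by
  have := congrArg Fin.val he
  simpa [E, Nat.mod_eq_of_lt (show m < 2*(2*h+1) by omega),
    Nat.mod_eq_of_lt (show m' < 2*(2*h+1) by omega)] using this

lemma E_ne {h m m' : ℕ} (hm : m < 4 * h + 2) (hm' : m' < 4 * h + 2) (hne : m ≠ m') :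
    E h m ≠ E h m' := fun he => hne (E_inj hm hm' he)

lemma E_val (h : ℕ) (i : Fin (2 * (2 * h + 1))) : E h i.val = i := by
  simp [E, Nat.mod_eq_of_lt i.isLt]

/-- the list `[E h (f 0), …, E h (f (n-1))]`. -/
def P (h : ℕ) (f : ℕ → ℕ) (n : ℕ) : List (Fin (2 * (2 * h + 1))) :=
  (List.range n).map fun i => E h (f i)

lemma P_len (h : ℕ) (f : ℕ → ℕ) (n : ℕ) : (P h f n).length = n := by simp [P]

lemma P_get (h : ℕ) (f : ℕ → ℕ) (n : ℕ) {i : ℕ} (hi : i < n) :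
    (P h f n)[i]'(by rw [P_len]; omega) = E h (f i) := by simp [P]

lemma P_nodup (h : ℕ) (f : ℕ → ℕ) (n : ℕ) (hb : ∀ k < n, f k < 4 * h + 2)
    (hinj : ∀ k < n, ∀ l < n, f k = f l → k = l) : (P h f n).Nodup := by
  refine List.Nodup.map_on ?_ (List.nodup_range (n := n))
  intro k hk l hl he
  rw [List.mem_range] at hk hl
  exact hinj k hk l hl (E_inj (hb k hk) (hb l hl) he)

lemma P_step (h : ℕ) (f : ℕ → ℕ) (n : ℕ) (w : (P h f n).Nodup) {i : ℕ} (hi : i + 1 < n) :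
    (P h f n).formPerm (E h (f i)) = E h (f (i + 1)) := by
  have h2 : i + 1 < (P h f n).length := by rw [P_len]; omega
  have := List.formPerm_apply_getElem (P h f n) w i (by omega)
  simp only [P_len h f n] at this
  simp only [Nat.mod_eq_of_lt hi] at this
  rwa [P_get h f n (by omega : i < n), P_get h f n hi] at this

lemma P_wrap (h : ℕ) (f : ℕ → ℕ) (n : ℕ) (w : (P h f n).Nodup) (hn : 0 < n) :
    (P h f n).formPerm (E h (f (n - 1))) = E h (f 0) := by
  have := List.formPerm_apply_getElem (P h f n) w (n - 1)
    (by rw [P_len]; omega)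
  simp only [P_len h f n] at this
  simp only [(by omega : n - 1 + 1 = n), Nat.mod_self] at this
  rwa [P_get h f n (by omega : n - 1 < n), P_get h f n hn] at this

lemma P_fix (h : ℕ) (f : ℕ → ℕ) (n : ℕ) {m : ℕ} (hm : m < 4 * h + 2)
    (hb : ∀ k < n, f k < 4 * h + 2) (hnm : ∀ k < n, f k ≠ m) :
    (P h f n).formPerm (E h m) = E h m := by
  apply List.formPerm_apply_of_notMem
  intro hmem
  obtain ⟨k, hk, he⟩ := List.mem_map.mp hmem
  rw [List.mem_range] at hk
  exact hnm k hk (E_inj (hb k hk) hm he)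

lemma P_not_mem (h : ℕ) (f : ℕ → ℕ) (n : ℕ) {m : ℕ} (hm : m < 4 * h + 2)
    (hb : ∀ k < n, f k < 4 * h + 2) (hnm : ∀ k < n, f k ≠ m) :
    E h m ∉ (P h f n) := by
  intro hmem
  obtain ⟨k, hk, he⟩ := List.mem_map.mp hmem
  rw [List.mem_range] at hk
  exact hnm k hk (E_inj (hb k hk) hm he)

/-- cycle type of the formPerm of such a list -/
lemma P_cycleType (h : ℕ) (f : ℕ → ℕ) (n : ℕ) (hn : 2 ≤ n) (w : (P h f n).Nodup) :
    (P h f n).formPerm.cycleType = {n} := by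
  have hlen : 2 ≤ (P h f n).length := by rw [P_len]; omega
  have hc : (P h f n).formPerm.IsCycle := List.isCycle_formPerm w hlen
  rw [hc.cycleType]
  congr 1
  rw [List.support_formPerm_of_nodup _ w (fun x hx => by
    have := congrArg List.length hx; rw [P_len] at this; simp at this; omega)]
  rw [List.toFinset_card_of_nodup w, P_len]

/-- the four concrete index functions -/
def f1 : ℕ → ℕ := id
def f2 (h : ℕ) : ℕ → ℕ := fun i => 2 * h + 1 + i
def fY (h : ℕ) : ℕ → ℕ := fun i =>
  if i < 2 * h - 1 then i else if i = 2 * h - 1 then 4 * h + 1 else 4 * h - 1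
def fB (h : ℕ) : ℕ → ℕ := fun j =>
  if j < h then 2 * j
  else if j < 3 * h - 1 then j + h + 1
  else if j < 4 * h - 1 then 2 * (j - (3 * h - 1)) + 1
  else 2 * h

section

variable {h : ℕ} (h1 : 1 ≤ h)

lemma fY_lt (h1 : 1 ≤ h) : ∀ k < 2 * h + 1, fY h k < 4 * h + 2 := by
  intro k hk; unfold fY; split_ifs <;> omega

lemma fY_inj (h1 : 1 ≤ h) : ∀ k < 2 * h + 1, ∀ l < 2 * h + 1, fY h k = fY h l → k = l := by
  intro k hk l hl he; unfold fY at he; split_ifs at he <;> omega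

lemma fB_lt (h1 : 1 ≤ h) : ∀ k < 4 * h, fB h k < 4 * h + 2 := by
  intro k hk; unfold fB; split_ifs <;> omega

lemma fB_inj (h1 : 1 ≤ h) : ∀ k < 4 * h, ∀ l < 4 * h, fB h k = fB h l → k = l := by
  intro k hk l hl he; unfold fB at he; split_ifs at he <;> omega

end


lemma f1_eval (i : ℕ) : f1 i = i := rfl

lemma f2_eval (h i : ℕ) : f2 h i = 2 * h + 1 + i := rfl

lemma fY_eval1 {h m : ℕ} (hm : m < 2 * h - 1) : fY h m = m := by
  simp only [fY, if_pos hm]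

lemma fY_eval2 {h : ℕ} : fY h (2 * h - 1) = 4 * h + 1 := by
  simp only [fY]; rw [if_neg (by omega)]; simp

lemma fY_eval3 {h : ℕ} (h1 : 1 ≤ h) : fY h (2 * h) = 4 * h - 1 := by
  simp only [fY]; rw [if_neg (by omega), if_neg (by omega)]

lemma fB_eval1 {h j : ℕ} (hj : j < h) : fB h j = 2 * j := by
  simp only [fB, if_pos hj]

lemma fB_eval2 {h j : ℕ} (hj1 : h ≤ j) (hj2 : j < 3 * h - 1) : fB h j = j + h + 1 := by
  simp only [fB]; rw [if_neg (by omega), if_pos hj2]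

lemma fB_eval3 {h j : ℕ} (hj1 : 3 * h - 1 ≤ j) (hj2 : j < 4 * h - 1) :
    fB h j = 2 * (j - (3 * h - 1)) + 1 := by
  simp only [fB]; rw [if_neg (by omega), if_neg (by omega), if_pos hj2]

lemma fB_eval4 {h : ℕ} (h1 : 1 ≤ h) : fB h (4 * h - 1) = 2 * h := by
  simp only [fB]; rw [if_neg (by omega), if_neg (by omega), if_neg (by omega)]

section Key

variable {h : ℕ}

lemma w1 : (P h f1 (2 * h + 1)).Nodup :=
  P_nodup _ _ _ (fun k hk => by simp only [f1, id]; omega)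
    (fun k _ l _ he => by simpa [f1] using he)

lemma w2 : (P h (f2 h) (2 * h + 1)).Nodup :=
  P_nodup _ _ _ (fun k hk => by simp only [f2]; omega)
    (fun k _ l _ he => by simp only [f2] at he; omega)

lemma wY (h1 : 1 ≤ h) : (P h (fY h) (2 * h + 1)).Nodup :=
  P_nodup _ _ _ (fY_lt h1) (fY_inj h1)

lemma wB (h1 : 1 ≤ h) : (P h (fB h) (4 * h)).Nodup :=
  P_nodup _ _ _ (fB_lt h1) (fB_inj h1)

lemma key (h1 : 1 ≤ h) :
    (P h f1 (2 * h + 1)).formPerm * (P h (f2 h) (2 * h + 1)).formPerm *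
        (P h (fY h) (2 * h + 1)).formPerm =
      (P h (fB h) (4 * h)).formPerm * Equiv.swap (E h (4 * h)) (E h (4 * h + 1)) := by
  -- fix lemmas
  have fix1 : ∀ m, 2 * h + 1 ≤ m → m < 4 * h + 2 →
      (P h f1 (2 * h + 1)).formPerm (E h m) = E h m := fun m hm1 hm2 =>
    P_fix h f1 _ hm2 (fun k hk => by simp only [f1, id]; omega)
      (fun k hk => by simp only [f1, id]; omega)
  have fix2 : ∀ m, m < 2 * h + 1 →
      (P h (f2 h) (2 * h + 1)).formPerm (E h m) = E h m := fun m hm1 =>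
    P_fix h (f2 h) _ (by omega) (fun k hk => by simp only [f2]; omega)
      (fun k hk => by simp only [f2]; omega)
  have fixY : ∀ m, 2 * h - 1 ≤ m → m < 4 * h + 2 → m ≠ 4 * h + 1 → m ≠ 4 * h - 1 →
      (P h (fY h) (2 * h + 1)).formPerm (E h m) = E h m := fun m hm1 hm2 hm3 hm4 =>
    P_fix h (fY h) _ hm2 (fY_lt h1)
      (fun k hk => by simp only [fY]; split_ifs <;> omega)
  have fixB : ∀ m, 4 * h ≤ m → m < 4 * h + 2 →
      (P h (fB h) (4 * h)).formPerm (E h m) = E h m := fun m hm1 hm2 =>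
    P_fix h (fB h) _ hm2 (fB_lt h1)
      (fun k hk => by simp only [fB]; split_ifs <;> omega)
  have fixS : ∀ m, m < 4 * h →
      Equiv.swap (E h (4 * h)) (E h (4 * h + 1)) (E h m) = E h m := fun m hm =>
    Equiv.swap_apply_of_ne_of_ne (E_ne (by omega) (by omega) (by omega))
      (E_ne (by omega) (by omega) (by omega))
  ext i
  obtain ⟨m, hm⟩ := i
  have hEm : (⟨m, hm⟩ : Fin (2 * (2 * h + 1))) = E h m := by
    simp [E, Nat.mod_eq_of_lt hm]
  rw [hEm]
  have hm' : m < 4 * h + 2 := by omega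
  simp only [Equiv.Perm.mul_apply]
  have hcase : (m % 2 = 0 ∧ m + 2 < 2 * h) ∨ m = 2 * h - 2 ∨
      (m % 2 = 1 ∧ m < 2 * h - 1) ∨ m = 2 * h - 1 ∨ m = 2 * h ∨
      (2 * h + 1 ≤ m ∧ m ≤ 4 * h - 2) ∨ m = 4 * h - 1 ∨ m = 4 * h ∨ m = 4 * h + 1 := by
    omega
  rcases hcase with ⟨hp, hlt⟩ | rfl | ⟨hp, hlt⟩ | rfl | rfl | ⟨hlo, hhi⟩ | rfl | rfl | rfl
  · -- A : m even, m + 2 < 2h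
    have sY := P_step h (fY h) (2 * h + 1) (wY h1) (i := m) (by omega)
    rw [fY_eval1 (by omega), fY_eval1 (by omega)] at sY
    have s1 := P_step h f1 (2 * h + 1) w1 (i := m + 1) (by omega)
    simp only [f1_eval] at s1
    have sB := P_step h (fB h) (4 * h) (wB h1) (i := m / 2) (by omega)
    rw [fB_eval1 (by omega), fB_eval1 (by omega),
      (by omega : 2 * (m / 2) = m), (by omega : 2 * (m / 2 + 1) = m + 2)] at sB
    rw [sY, fix2 (m + 1) (by omega), s1, fixS m (by omega), sB]
  · -- B : m = 2h - 2
    have sY := P_step h (fY h) (2 * h + 1) (wY h1) (i := 2 * h - 2) (by omega)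
    rw [fY_eval1 (by omega), (by omega : 2 * h - 2 + 1 = 2 * h - 1), fY_eval2] at sY
    have s2 := P_wrap h (f2 h) (2 * h + 1) w2 (by omega)
    simp only [f2_eval] at s2
    rw [(by omega : 2 * h + 1 + (2 * h + 1 - 1) = 4 * h + 1)] at s2
    have sB := P_step h (fB h) (4 * h) (wB h1) (i := h - 1) (by omega)
    rw [fB_eval1 (by omega), (by omega : h - 1 + 1 = h), fB_eval2 (by omega) (by omega),
      (by omega : 2 * (h - 1) = 2 * h - 2), (by omega : h + h + 1 = 2 * h + 1)] at sB
    rw [sY, s2, fix1 (2 * h + 1) (by omega) (by omega), fixS (2 * h - 2) (by omega), sB]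
  · -- C : m odd, m < 2h - 1
    have sY := P_step h (fY h) (2 * h + 1) (wY h1) (i := m) (by omega)
    rw [fY_eval1 (by omega), fY_eval1 (by omega)] at sY
    have s1 := P_step h f1 (2 * h + 1) w1 (i := m + 1) (by omega)
    simp only [f1_eval] at s1
    have sB := P_step h (fB h) (4 * h) (wB h1) (i := 3 * h - 1 + m / 2) (by omega)
    rw [fB_eval3 (by omega) (by omega), fB_eval3 (by omega) (by omega),
      (by omega : 3 * h - 1 + m / 2 - (3 * h - 1) = m / 2),
      (by omega : 3 * h - 1 + m / 2 + 1 - (3 * h - 1) = m / 2 + 1),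
      (by omega : 2 * (m / 2) + 1 = m), (by omega : 2 * (m / 2 + 1) + 1 = m + 2)] at sB
    rw [sY, fix2 (m + 1) (by omega), s1, fixS m (by omega), sB]
  · -- D : m = 2h - 1
    have s1 := P_step h f1 (2 * h + 1) w1 (i := 2 * h - 1) (by omega)
    simp only [f1_eval] at s1
    rw [(by omega : 2 * h - 1 + 1 = 2 * h)] at s1
    have sB := P_step h (fB h) (4 * h) (wB h1) (i := 4 * h - 2) (by omega)
    rw [fB_eval3 (by omega) (by omega), (by omega : 4 * h - 2 + 1 = 4 * h - 1),
      fB_eval4 h1, (by omega : 2 * (4 * h - 2 - (3 * h - 1)) + 1 = 2 * h - 1)] at sB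
    rw [fixY (2 * h - 1) (by omega) (by omega) (by omega) (by omega),
      fix2 (2 * h - 1) (by omega), s1, fixS (2 * h - 1) (by omega), sB]
  · -- E : m = 2h
    have s1 := P_wrap h f1 (2 * h + 1) w1 (by omega)
    simp only [f1_eval] at s1
    rw [(by omega : 2 * h + 1 - 1 = 2 * h)] at s1
    have sB := P_wrap h (fB h) (4 * h) (wB h1) (by omega)
    rw [fB_eval4 h1, fB_eval1 (by omega)] at sB
    rw [fixY (2 * h) (by omega) (by omega) (by omega) (by omega),
      fix2 (2 * h) (by omega), s1, fixS (2 * h) (by omega), sB,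
      (by omega : 2 * 0 = 0)]
  · -- F : 2h+1 ≤ m ≤ 4h-2
    have s2 := P_step h (f2 h) (2 * h + 1) w2 (i := m - (2 * h + 1)) (by omega)
    simp only [f2_eval] at s2
    rw [(by omega : 2 * h + 1 + (m - (2 * h + 1)) = m),
      (by omega : 2 * h + 1 + (m - (2 * h + 1) + 1) = m + 1)] at s2
    have sB := P_step h (fB h) (4 * h) (wB h1) (i := m - h - 1) (by omega)
    rw [fB_eval2 (by omega) (by omega), fB_eval2 (by omega) (by omega),
      (by omega : m - h - 1 + h + 1 = m), (by omega : m - h - 1 + 1 + h + 1 = m + 1)] at sB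
    rw [fixY m (by omega) (by omega) (by omega) (by omega), s2,
      fix1 (m + 1) (by omega) (by omega), fixS m (by omega), sB]
  · -- G : m = 4h - 1
    have sY := P_wrap h (fY h) (2 * h + 1) (wY h1) (by omega)
    rw [(by omega : 2 * h + 1 - 1 = 2 * h), fY_eval3 h1, fY_eval1 (by omega)] at sY
    have s1 := P_step h f1 (2 * h + 1) w1 (i := 0) (by omega)
    simp only [f1_eval] at s1
    have sB := P_step h (fB h) (4 * h) (wB h1) (i := 3 * h - 2) (by omega)
    rw [fB_eval2 (by omega) (by omega), (by omega : 3 * h - 2 + 1 = 3 * h - 1),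
      fB_eval3 (by omega) (by omega), (by omega : 3 * h - 2 + h + 1 = 4 * h - 1),
      (by omega : 2 * (3 * h - 1 - (3 * h - 1)) + 1 = 1)] at sB
    rw [sY, fix2 0 (by omega), s1, fixS (4 * h - 1) (by omega), sB]
  · -- H : m = 4h
    have s2 := P_step h (f2 h) (2 * h + 1) w2 (i := 2 * h - 1) (by omega)
    simp only [f2_eval] at s2
    rw [(by omega : 2 * h + 1 + (2 * h - 1) = 4 * h),
      (by omega : 2 * h + 1 + (2 * h - 1 + 1) = 4 * h + 1)] at s2
    rw [fixY (4 * h) (by omega) (by omega) (by omega) (by omega), s2,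
      fix1 (4 * h + 1) (by omega) (by omega), Equiv.swap_apply_left,
      fixB (4 * h + 1) (by omega) (by omega)]
  · -- I : m = 4h + 1
    have sY := P_step h (fY h) (2 * h + 1) (wY h1) (i := 2 * h - 1) (by omega)
    rw [fY_eval2, (by omega : 2 * h - 1 + 1 = 2 * h), fY_eval3 h1] at sY
    have s2 := P_step h (f2 h) (2 * h + 1) w2 (i := 2 * h - 2) (by omega)
    simp only [f2_eval] at s2
    rw [(by omega : 2 * h + 1 + (2 * h - 2) = 4 * h - 1),
      (by omega : 2 * h + 1 + (2 * h - 2 + 1) = 4 * h)] at s2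
    rw [sY, s2, fix1 (4 * h) (by omega) (by omega), Equiv.swap_apply_right,
      fixB (4 * h) (by omega) (by omega)]

lemma x_cycleType (h1 : 1 ≤ h) :
    ((P h f1 (2 * h + 1)).formPerm * (P h (f2 h) (2 * h + 1)).formPerm).cycleType
      = {2 * h + 1, 2 * h + 1} := by
  have hd : Equiv.Perm.Disjoint (P h f1 (2 * h + 1)).formPerm
      (P h (f2 h) (2 * h + 1)).formPerm := by
    rw [List.formPerm_disjoint_iff w1 w2 (by rw [P_len]; omega) (by rw [P_len]; omega)]
    intro x hx hx'
    obtain ⟨k, hk, rfl⟩ := List.mem_map.mp hx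
    obtain ⟨l, hl, he⟩ := List.mem_map.mp hx'
    rw [List.mem_range] at hk hl
    have h3 : E h k = E h (2 * h + 1 + l) := he.symm
    have := E_inj (show k < 4 * h + 2 by omega) (show 2 * h + 1 + l < 4 * h + 2 by omega) h3
    omega
  rw [hd.cycleType_mul, P_cycleType h f1 _ (by omega) w1, P_cycleType h (f2 h) _ (by omega) w2]
  rfl

lemma z_cycleType (h1 : 1 ≤ h) :
    ((P h (fB h) (4 * h)).formPerm * Equiv.swap (E h (4 * h)) (E h (4 * h + 1))).cycleType
      = {4 * h, 2} := by
  have hne : E h (4 * h) ≠ E h (4 * h + 1) := E_ne (by omega) (by omega) (by omega)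
  have hdz : Equiv.Perm.Disjoint (P h (fB h) (4 * h)).formPerm
      (Equiv.swap (E h (4 * h)) (E h (4 * h + 1))) := by
    rw [Equiv.Perm.disjoint_iff_disjoint_support,
      List.support_formPerm_of_nodup _ (wB h1) (fun x hx => by
        have := congrArg List.length hx; rw [P_len] at this; simp at this),
      Equiv.Perm.support_swap hne, Finset.disjoint_right]
    intro x hx
    simp only [Finset.mem_insert, Finset.mem_singleton] at hx
    rw [List.mem_toFinset]
    rcases hx with rfl | rfl
    · exact P_not_mem h (fB h) _ (by omega) (fB_lt h1)
        (fun k hk => by simp only [fB]; split_ifs <;> omega)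
    · exact P_not_mem h (fB h) _ (by omega) (fB_lt h1)
        (fun k hk => by simp only [fB]; split_ifs <;> omega)
  have hsw : (Equiv.swap (E h (4 * h)) (E h (4 * h + 1))).cycleType = {2} := by
    rw [(Equiv.Perm.isCycle_swap hne).cycleType, Equiv.Perm.card_support_swap hne]
  rw [hdz.cycleType_mul, P_cycleType h (fB h) _ (by omega) (wB h1), hsw]
  rfl

end Key

end ExceptionalAA

/-- For every odd `a ≥ 3` there exist `x, y ∈ S_{2a}` with `x` of cycle type
`{a, a}`, `y` an `a`-cycle, and `x * y` of cycle type `{2a - 2, 2}`. -/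
theorem exceptional_a_a (a : ℕ) (ha : Odd a) (ha3 : 3 ≤ a) :
    ∃ x y : Equiv.Perm (Fin (2 * a)),
      x.cycleType = ({a, a} : Multiset ℕ) ∧ y.cycleType = ({a} : Multiset ℕ) ∧
      (x * y).cycleType = ({2 * a - 2, 2} : Multiset ℕ) := by
  open ExceptionalAA in
  obtain ⟨h, rfl⟩ := ha
  have h1 : 1 ≤ h := by omega
  refine ⟨(P h f1 (2 * h + 1)).formPerm * (P h (f2 h) (2 * h + 1)).formPerm,
    (P h (fY h) (2 * h + 1)).formPerm, ?_, ?_, ?_⟩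
  · exact x_cycleType h1
  · exact P_cycleType h (fY h) _ (by omega) (wY h1)
  · rw [key h1, z_cycleType h1, (by omega : 2 * (2 * h + 1) - 2 = 4 * h)]
end

section
/- There exist permutations x, y in the symmetric group S_{10} such that x has cycle type {3, 3, 3} (the disjoint product of three 3-cycles), y is a 5-cycle (cycle type {5}), and the product x·y has cycle type {8, 2}. -/
private def pm (l : List (Fin 10)) : Equiv.Perm (Fin 10) := l.formPerm

private lemma ct (l : List (Fin 10)) (h : l.Nodup) (h2 : 2 ≤ l.length) :
    (pm l).cycleType = {l.length} := by
  unfold pm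
  rw [(List.isCycle_formPerm h h2).cycleType]
  congr 1
  rw [List.support_formPerm_of_nodup l h (by rintro x rfl; simp at h2)]
  exact List.toFinset_card_of_nodup h

/-- There exist `x, y ∈ S_10` with `x` of cycle type `{3, 3, 3}`, `y` a
`5`-cycle, and `x * y` of cycle type `{8, 2}`. -/
theorem exceptional_3_5_8 :
    ∃ x y : Equiv.Perm (Fin 10),
      x.cycleType = ({3, 3, 3} : Multiset ℕ) ∧
      y.cycleType = ({5} : Multiset ℕ) ∧
      (x * y).cycleType = ({8, 2} : Multiset ℕ) := by
  refine ⟨pm [0,1,2] * pm [3,4,5] * pm [6,7,8], pm [0,3,7,8,9], ?_, ?_, ?_⟩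
  · have d1 : (pm [0,1,2]).Disjoint (pm [3,4,5]) := by intro z; revert z; decide
    have d2 : (pm [0,1,2] * pm [3,4,5]).Disjoint (pm [6,7,8]) := by intro z; revert z; decide
    rw [Equiv.Perm.Disjoint.cycleType_mul d2, Equiv.Perm.Disjoint.cycleType_mul d1, ct _ (by decide) (by decide),
      ct _ (by decide) (by decide), ct _ (by decide) (by decide)]
    rfl
  · exact ct _ (by decide) (by decide)
  · have he : pm [0,1,2] * pm [3,4,5] * pm [6,7,8] * pm [0,3,7,8,9]
        = pm [0,4,5,3,8,9,1,2] * pm [6,7] := by decide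
    have d : (pm [0,4,5,3,8,9,1,2]).Disjoint (pm [6,7]) := by intro z; revert z; decide
    rw [he, Equiv.Perm.Disjoint.cycleType_mul d, ct _ (by decide) (by decide), ct _ (by decide) (by decide)]
    rfl
end

section
/- Let k ≥ 2 be an integer and let n be a natural number with n ≤ 2^k + 1. Then there do not exist permutations x, y, z in the symmetric group S_n such that x and y both have order 2^k − 1, z has order 2^k, and x·y·z = 1. In particular, for the order triple (a, b, c) = (2^k − 1, 2^k − 1, 2^k), the permutation degree c + 2 in the main theorem cannot be improved. -/
/-- Sharpness of the degree bound: for `k ≥ 2` and `n ≤ 2^k + 1`, there are no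
`x, y, z ∈ S_n` of orders `2^k - 1`, `2^k - 1`, `2^k` with `x * y * z = 1`. -/
theorem degree_bound_sharp (k n : ℕ) (hk : 2 ≤ k) (hn : n ≤ 2 ^ k + 1) :
    ¬ ∃ x y z : Equiv.Perm (Fin n),
      orderOf x = 2 ^ k - 1 ∧ orderOf y = 2 ^ k - 1 ∧ orderOf z = 2 ^ k ∧
      x * y * z = 1 := by
  rintro ⟨x, y, z, hx, hy, hz, hxyz⟩
  have h1 : 1 ≤ 2 ^ k := Nat.one_le_two_pow
  have h2k : 2 ∣ 2 ^ k := dvd_pow_self 2 (by omega)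
  obtain ⟨m, hm⟩ := h2k
  have hodd : Odd (2 ^ k - 1) := ⟨m - 1, by omega⟩
  -- x and y are even permutations
  have sign_one : ∀ w : Equiv.Perm (Fin n), orderOf w = 2 ^ k - 1 →
      Equiv.Perm.sign w = 1 := by
    intro w hw
    have hpow : (Equiv.Perm.sign w) ^ (2 ^ k - 1) = 1 := by
      rw [← map_pow, ← hw, pow_orderOf_eq_one, map_one]
    rcases Int.units_eq_one_or (Equiv.Perm.sign w) with h | h
    · exact h
    · rw [h, hodd.neg_one_pow] at hpow
      exact absurd hpow (by decide)
  have hsx := sign_one x hx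
  have hsy := sign_one y hy
  have hsz : Equiv.Perm.sign z = 1 := by
    have h := congrArg Equiv.Perm.sign hxyz
    rw [map_mul, map_mul, hsx, hsy, map_one, one_mul, one_mul] at h
    exact h
  -- z's cycle type must be {2^k}
  have hlcm : z.cycleType.lcm = 2 ^ k := by rw [Equiv.Perm.lcm_cycleType, hz]
  have hex : (2 ^ k) ∈ z.cycleType := by
    by_contra hmem
    have hdvd : z.cycleType.lcm ∣ 2 ^ (k - 1) := by
      apply Multiset.lcm_dvd.mpr
      intro a ha
      have hadvd : a ∣ 2 ^ k := hlcm ▸ Multiset.dvd_lcm ha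
      obtain ⟨j, hj, rfl⟩ := (Nat.dvd_prime_pow Nat.prime_two).mp hadvd
      have hjk : j ≠ k := fun h => hmem (h ▸ ha)
      exact pow_dvd_pow 2 (by omega)
    rw [hlcm] at hdvd
    have hle := Nat.le_of_dvd (Nat.pow_pos (by norm_num)) hdvd
    have hlt : (2:ℕ) ^ (k-1) < 2 ^ k := Nat.pow_lt_pow_right one_lt_two (by omega)
    omega
  obtain ⟨t, ht⟩ := Multiset.exists_cons_of_mem hex
  have hsum : z.cycleType.sum ≤ n := by
    rw [Equiv.Perm.sum_cycleType]
    have := Finset.card_le_univ z.support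
    simpa using this
  have ht0 : t = 0 := by
    by_contra h
    obtain ⟨a, ha⟩ := Multiset.exists_mem_of_ne_zero h
    have h2a : 2 ≤ a :=
      Equiv.Perm.two_le_of_mem_cycleType (ht ▸ Multiset.mem_cons_of_mem ha)
    have hat : a ≤ t.sum := Multiset.single_le_sum (fun _ _ => Nat.zero_le _) a ha
    have : z.cycleType.sum = 2 ^ k + t.sum := by rw [ht, Multiset.sum_cons]
    omega
  have hct : z.cycleType = {2 ^ k} := by rw [ht, ht0]; rfl
  -- sign of a 2^k-cycle is -1
  have hsign : Equiv.Perm.sign z = -1 := by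
    rw [Equiv.Perm.sign_of_cycleType, hct]
    simp only [Multiset.sum_singleton, Multiset.card_singleton]
    have : Odd (2 ^ k + 1) := by
      obtain ⟨m, hm⟩ := (⟨m, by omega⟩ : Even (2 ^ k))
      exact ⟨m, by omega⟩
    rw [this.neg_one_pow]
  rw [hsz] at hsign
  exact absurd hsign (by decide)
end
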